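/- arXiv:2503.15611 — 6 statements merged into one kernel-verified Lean document; each statement's English description precedes it below -/
import Mathlib

section
/- Let H be a complex Hilbert space, A a *-subalgebra of the algebra B(H) of bounded linear operators on H (a subalgebra closed under taking adjoints), and H₀ a dense subset of H. Let (U_λ) be a net in A, indexed by a nonempty directed set, which is uniformly bounded in operator norm, and suppose that for every ξ ∈ H₀ both nets (U_λ ξ) and (U_λ* ξ) converge in the norm of H. Then there exists an operator U belonging to the double commutant A'' such that U_λ converges to U in the strong-* operator topology; that is, U_λ ξ → U ξ and U_λ* ξ → U* ξ in norm for every ξ ∈ H. -/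
open Filter

open scoped InnerProductSpace

private lemma net_cauchySeq {E : Type*} [PseudoMetricSpace E] {ι : Type*} [Nonempty ι]
    [Preorder ι] [IsDirected ι (· ≤ ·)] {u : ι → E}
    (h : ∀ ε > (0 : ℝ), ∃ N, ∀ m, N ≤ m → ∀ n, N ≤ n → dist (u m) (u n) < ε) :
    CauchySeq u := by
  refine ⟨Filter.map_neBot, fun s hs => ?_⟩
  obtain ⟨ε, hε, hεs⟩ := Metric.mem_uniformity_dist.1 hs
  obtain ⟨N, hN⟩ := h ε hε
  rw [Filter.mem_prod_iff]
  refine ⟨u '' Set.Ici N, Filter.image_mem_map (Filter.Ici_mem_atTop N),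
          u '' Set.Ici N, Filter.image_mem_map (Filter.Ici_mem_atTop N), ?_⟩
  rintro ⟨x, y⟩ ⟨⟨m, hm, rfl⟩, ⟨n, hn, rfl⟩⟩
  exact hεs (hN m hm n hn)

private lemma net_pointwise_limit {H : Type*} [NormedAddCommGroup H] [InnerProductSpace ℂ H]
    [CompleteSpace H] {ι : Type*} [Nonempty ι] [Preorder ι] [IsDirected ι (· ≤ ·)]
    (V : ι → (H →L[ℂ] H)) {M : ℝ} (hM0 : 0 ≤ M) (hM : ∀ l, ‖V l‖ ≤ M)
    {H₀ : Set H} (hdense : Dense H₀)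
    (hc : ∀ ξ ∈ H₀, ∃ y, Tendsto (fun l => V l ξ) atTop (nhds y)) (ξ : H) :
    ∃ y, Tendsto (fun l => V l ξ) atTop (nhds y) := by
  apply cauchySeq_tendsto_of_complete
  apply net_cauchySeq
  intro ε hε
  have hM1 : (0 : ℝ) < M + 1 := by linarith
  obtain ⟨ξ₀, hξ₀mem, hξ₀⟩ := hdense.exists_dist_lt ξ (show 0 < ε / (4 * (M + 1)) by positivity)
  obtain ⟨y, hy⟩ := hc ξ₀ hξ₀mem
  have hev := hy.eventually (Metric.ball_mem_nhds y (show (0:ℝ) < ε / 4 by linarith))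
  obtain ⟨N, -, hN⟩ := atTop_basis.eventually_iff.1 hev
  refine ⟨N, fun m hm n hn => ?_⟩
  have key : ∀ k, dist (V k ξ) (V k ξ₀) < ε / 4 := by
    intro k
    have h1 : dist (V k ξ) (V k ξ₀) ≤ M * dist ξ ξ₀ := by
      rw [dist_eq_norm, ← map_sub, dist_eq_norm]
      calc ‖V k (ξ - ξ₀)‖ ≤ ‖V k‖ * ‖ξ - ξ₀‖ := (V k).le_opNorm _
        _ ≤ M * ‖ξ - ξ₀‖ := mul_le_mul_of_nonneg_right (hM k) (norm_nonneg _)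
    have h2 : M * dist ξ ξ₀ < ε / 4 := by
      calc M * dist ξ ξ₀ ≤ (M + 1) * dist ξ ξ₀ := by nlinarith [dist_nonneg (x := ξ) (y := ξ₀)]
        _ < (M + 1) * (ε / (4 * (M + 1))) := by exact mul_lt_mul_of_pos_left hξ₀ hM1
        _ = ε / 4 := by field_simp
    linarith
  have hm' : dist (V m ξ₀) y < ε / 4 := hN hm
  have hn' : dist (V n ξ₀) y < ε / 4 := hN hn
  have tri : dist (V m ξ) (V n ξ) ≤
      dist (V m ξ) (V m ξ₀) + dist (V m ξ₀) (V n ξ₀) + dist (V n ξ₀) (V n ξ) :=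
    dist_triangle4 _ _ _ _
  have tri2 : dist (V m ξ₀) (V n ξ₀) ≤ dist (V m ξ₀) y + dist y (V n ξ₀) := dist_triangle _ _ _
  have := key m
  have := key n
  rw [dist_comm y (V n ξ₀)] at tri2
  rw [dist_comm (V n ξ₀) (V n ξ)] at tri
  linarith

/-- Let `H` be a complex Hilbert space, `A` a *-subalgebra of `B(H)` (formalized as a
`StarSubalgebra` of the continuous linear endomorphisms of `H`), and `H₀` a dense subset
of `H`.  Let `(U l)` be a net in `A` indexed by a nonempty directed set `ι`, uniformly
bounded in operator norm, such that for every `ξ ∈ H₀` both `U l ξ` and `(U l)* ξ`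
converge in norm.  Then there exists `Uop` in the double commutant `A''`
(the centralizer of the centralizer of `A` in `B(H)`) such that `U l → Uop` in the
strong-* operator topology, i.e. `U l ξ → Uop ξ` and `(U l)* ξ → Uop* ξ` for every `ξ ∈ H`. -/
theorem strongStar_limit_exists_mem_double_commutant
    {H : Type} [NormedAddCommGroup H] [InnerProductSpace ℂ H] [CompleteSpace H]
    (A : StarSubalgebra ℂ (H →L[ℂ] H))
    (H₀ : Set H) (hdense : Dense H₀)
    {ι : Type} [Nonempty ι] [Preorder ι] [IsDirected ι (· ≤ ·)]
    (U : ι → (H →L[ℂ] H)) (hmem : ∀ l, U l ∈ A)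
    (hbdd : ∃ M : ℝ, ∀ l, ‖U l‖ ≤ M)
    (hconv : ∀ ξ ∈ H₀,
      (∃ y : H, Tendsto (fun l => U l ξ) atTop (nhds y)) ∧
      (∃ z : H, Tendsto (fun l => (ContinuousLinearMap.adjoint (U l)) ξ) atTop (nhds z))) :
    ∃ Uop : H →L[ℂ] H,
      Uop ∈ Set.centralizer (Set.centralizer (A : Set (H →L[ℂ] H))) ∧
      ∀ ξ : H,
        Tendsto (fun l => U l ξ) atTop (nhds (Uop ξ)) ∧
        Tendsto (fun l => (ContinuousLinearMap.adjoint (U l)) ξ) atTop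
          (nhds ((ContinuousLinearMap.adjoint Uop) ξ)) := by
  obtain ⟨M₀, hM₀⟩ := hbdd
  set M : ℝ := max M₀ 0 with hMdef
  have hM0 : (0 : ℝ) ≤ M := le_max_right _ _
  have hM : ∀ l, ‖U l‖ ≤ M := fun l => (hM₀ l).trans (le_max_left _ _)
  have hM' : ∀ l, ‖ContinuousLinearMap.adjoint (U l)‖ ≤ M := fun l => by
    rw [LinearIsometryEquiv.norm_map]; exact hM l
  have hWex : ∀ ξ : H, ∃ y, Tendsto (fun l => U l ξ) atTop (nhds y) :=
    net_pointwise_limit U hM0 hM hdense (fun ξ hξ => (hconv ξ hξ).1)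
  have hW'ex : ∀ ξ : H, ∃ y,
      Tendsto (fun l => ContinuousLinearMap.adjoint (U l) ξ) atTop (nhds y) :=
    net_pointwise_limit (fun l => ContinuousLinearMap.adjoint (U l)) hM0 hM' hdense
      (fun ξ hξ => (hconv ξ hξ).2)
  choose W hWt using hWex
  choose W' hW't using hW'ex
  have hadd : ∀ x y : H, W (x + y) = W x + W y := by
    intro x y
    refine tendsto_nhds_unique (hWt (x + y)) ?_
    exact ((hWt x).add (hWt y)).congr (fun l => (map_add (U l) x y).symm)
  have hsmul : ∀ (c : ℂ) (x : H), W (c • x) = c • W x := by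
    intro c x
    refine tendsto_nhds_unique (hWt (c • x)) ?_
    exact ((hWt x).const_smul c).congr (fun l => (map_smul (U l) c x).symm)
  have hbound : ∀ ξ : H, ‖W ξ‖ ≤ M * ‖ξ‖ := by
    intro ξ
    refine le_of_tendsto (hWt ξ).norm (Eventually.of_forall fun l => ?_)
    calc ‖U l ξ‖ ≤ ‖U l‖ * ‖ξ‖ := (U l).le_opNorm ξ
      _ ≤ M * ‖ξ‖ := mul_le_mul_of_nonneg_right (hM l) (norm_nonneg _)
  let Wlin : H →ₗ[ℂ] H :=
    { toFun := W, map_add' := hadd, map_smul' := hsmul }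
  let Uop : H →L[ℂ] H := LinearMap.mkContinuous Wlin M hbound
  have hUop : ∀ ξ, Uop ξ = W ξ := fun ξ => rfl
  have hadj : ∀ ξ : H, W' ξ = ContinuousLinearMap.adjoint Uop ξ := by
    intro ξ
    refine ext_inner_left ℂ (fun η => ?_)
    have h1 : Tendsto (fun l => (⟪η, ContinuousLinearMap.adjoint (U l) ξ⟫_ℂ)) atTop
        (nhds ⟪η, W' ξ⟫_ℂ) := tendsto_const_nhds.inner (hW't ξ)
    have h2 : Tendsto (fun l => (⟪η, ContinuousLinearMap.adjoint (U l) ξ⟫_ℂ)) atTop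
        (nhds ⟪η, ContinuousLinearMap.adjoint Uop ξ⟫_ℂ) := by
      have h3 : Tendsto (fun l => (⟪U l η, ξ⟫_ℂ)) atTop (nhds ⟪Uop η, ξ⟫_ℂ) := by
        rw [hUop]
        exact (hWt η).inner tendsto_const_nhds
      rw [ContinuousLinearMap.adjoint_inner_right]
      exact h3.congr (fun l => (ContinuousLinearMap.adjoint_inner_right (U l) η ξ).symm)
    exact tendsto_nhds_unique h1 h2
  refine ⟨Uop, ?_, fun ξ => ⟨hWt ξ, (hadj ξ) ▸ hW't ξ⟩⟩
  rw [Set.mem_centralizer_iff]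
  intro T hT
  ext ξ
  have hTc : ∀ l, T (U l ξ) = U l (T ξ) := by
    intro l
    have := hT (U l) (hmem l)
    calc T (U l ξ) = (T * U l) ξ := rfl
      _ = (U l * T) ξ := by rw [this]
      _ = U l (T ξ) := rfl
  have h1 : Tendsto (fun l => T (U l ξ)) atTop (nhds (T (Uop ξ))) :=
    (T.continuous.tendsto _).comp (hWt ξ)
  have h2 : Tendsto (fun l => T (U l ξ)) atTop (nhds (Uop (T ξ))) :=
    (hWt (T ξ)).congr (fun l => (hTc l).symm)
  exact tendsto_nhds_unique h1 h2
end

section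
/- The coproduct Δ of the quantum double D(G) is a homomorphism of unital ℂ-algebras from D(G) to D(G) ⊗_ℂ D(G) (with componentwise multiplication and unit η ⊗ η on the tensor product), Δ is coassociative, i.e. (Δ ⊗ id) ∘ Δ = (id ⊗ Δ) ∘ Δ, and the counit ε is a unital ℂ-algebra homomorphism D(G) → ℂ satisfying (ε ⊗ id) ∘ Δ = id = (id ⊗ ε) ∘ Δ; thus (D(G), Δ, ε) is a ℂ-bialgebra. -/
/-
The quantum double `D(G)` of a finite group `G` is modeled as the function space
`(G × G) → ℂ` (the complex vector space freely spanned by `G × G`, the basis element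
`(g,h)` being the indicator function of `{(g,h)}`).  Likewise the tensor products
`D(G) ⊗ D(G)` and `D(G) ⊗ D(G) ⊗ D(G)` are modeled as `((G×G) × (G×G)) → ℂ` and
`((G×G) × (G×G) × (G×G)) → ℂ`, via `δ_p ⊗ δ_q ↦ δ_{(p,q)}`.

* `qmul` : multiplication of `D(G)`, `(g₁,h₁)·(g₂,h₂) = δ_{g₁,h₁g₂h₁⁻¹}(g₁,h₁h₂)`.
* `eta` : the unit `η = Σ_k (k,1)`; `eta2 = η ⊗ η`.
* `qmul2` : the componentwise multiplication on `D(G) ⊗ D(G)`.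
* `Delta` : the coproduct, `Δ(g,h) = Σ_k (k,h) ⊗ (k⁻¹g,h)`; in closed form
  `(Δx)((g₁,h₁),(g₂,h₂)) = δ_{h₁,h₂} x(g₁g₂,h₁)`.
* `eps` : the counit, `ε(g,h) = δ_{g,1}`, i.e. `ε(x) = Σ_h x(1,h)`.
* `DeltaOne = Δ ⊗ id`, `DeltaTwo = id ⊗ Δ` from `D(G)⊗D(G)` to the triple tensor product.
* `epsL = ε ⊗ id`, `epsR = id ⊗ ε` from `D(G)⊗D(G)` to `D(G)`.
-/

namespace QuantumDoubleStmt4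

variable {G : Type} [Group G] [Fintype G] [DecidableEq G]

noncomputable def qmul (x y : (G × G) → ℂ) : (G × G) → ℂ :=
  fun p => ∑ k : G, x (p.1, k) * y (k⁻¹ * p.1 * k, k⁻¹ * p.2)

noncomputable def eta : (G × G) → ℂ := fun p => if p.2 = 1 then 1 else 0

noncomputable def qmul2 (x y : ((G × G) × (G × G)) → ℂ) : ((G × G) × (G × G)) → ℂ :=
  fun p => ∑ k₁ : G, ∑ k₂ : G,
    x ((p.1.1, k₁), (p.2.1, k₂)) *
      y ((k₁⁻¹ * p.1.1 * k₁, k₁⁻¹ * p.1.2), (k₂⁻¹ * p.2.1 * k₂, k₂⁻¹ * p.2.2))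

noncomputable def eta2 : ((G × G) × (G × G)) → ℂ :=
  fun p => if p.1.2 = 1 ∧ p.2.2 = 1 then 1 else 0

noncomputable def Delta (x : (G × G) → ℂ) : ((G × G) × (G × G)) → ℂ :=
  fun p => if p.1.2 = p.2.2 then x (p.1.1 * p.2.1, p.1.2) else 0

noncomputable def eps (x : (G × G) → ℂ) : ℂ := ∑ h : G, x (1, h)

/-- `Δ ⊗ id` on the (function model of the) tensor product. -/
noncomputable def DeltaOne (x : ((G × G) × (G × G)) → ℂ) :
    ((G × G) × (G × G) × (G × G)) → ℂ :=
  fun t => if t.1.2 = t.2.1.2 then x ((t.1.1 * t.2.1.1, t.1.2), t.2.2) else 0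

/-- `id ⊗ Δ` on the (function model of the) tensor product. -/
noncomputable def DeltaTwo (x : ((G × G) × (G × G)) → ℂ) :
    ((G × G) × (G × G) × (G × G)) → ℂ :=
  fun t => if t.2.1.2 = t.2.2.2 then x (t.1, (t.2.1.1 * t.2.2.1, t.2.1.2)) else 0

/-- `ε ⊗ id`. -/
noncomputable def epsL (x : ((G × G) × (G × G)) → ℂ) : (G × G) → ℂ :=
  fun q => ∑ h : G, x ((1, h), q)

/-- `id ⊗ ε`. -/
noncomputable def epsR (x : ((G × G) × (G × G)) → ℂ) : (G × G) → ℂ :=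
  fun p => ∑ h : G, x (p, (1, h))

/-- The coproduct `Δ` of the quantum double `D(G)` is a homomorphism of unital ℂ-algebras
from `D(G)` to `D(G) ⊗ D(G)` (with componentwise multiplication and unit `η ⊗ η`),
`Δ` is coassociative, and the counit `ε` is a unital ℂ-algebra homomorphism
`D(G) → ℂ` satisfying `(ε ⊗ id) ∘ Δ = id = (id ⊗ ε) ∘ Δ`; thus `(D(G), Δ, ε)` is a
ℂ-bialgebra. -/
theorem quantum_double_bialgebra :
    -- Δ is ℂ-linear
    (∀ x y : (G × G) → ℂ, Delta (x + y) = Delta x + Delta y) ∧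
    (∀ (c : ℂ) (x : (G × G) → ℂ), Delta (c • x) = c • Delta x) ∧
    -- Δ is multiplicative and unital
    (∀ x y : (G × G) → ℂ, Delta (qmul x y) = qmul2 (Delta x) (Delta y)) ∧
    (Delta (eta : (G × G) → ℂ) = eta2) ∧
    -- coassociativity
    (∀ x : (G × G) → ℂ, DeltaOne (Delta x) = DeltaTwo (Delta x)) ∧
    -- ε is a ℂ-linear, multiplicative, unital map to ℂ
    (∀ x y : (G × G) → ℂ, eps (x + y) = eps x + eps y) ∧
    (∀ (c : ℂ) (x : (G × G) → ℂ), eps (c • x) = c * eps x) ∧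
    (∀ x y : (G × G) → ℂ, eps (qmul x y) = eps x * eps y) ∧
    (eps (eta : (G × G) → ℂ) = 1) ∧
    -- counit laws
    (∀ x : (G × G) → ℂ, epsL (Delta x) = x ∧ epsR (Delta x) = x) := by
  refine ⟨?_, ?_, ?_, ?_, ?_, ?_, ?_, ?_, ?_, ?_⟩
  · intro x y; funext p; by_cases h : p.1.2 = p.2.2 <;> simp [Delta, h]
  · intro c x; funext p; by_cases h : p.1.2 = p.2.2 <;> simp [Delta, h]
  · intro x y; funext p
    obtain ⟨⟨g₁, h₁⟩, ⟨g₂, h₂⟩⟩ := p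
    simp only [Delta, qmul, qmul2, Prod.fst, Prod.snd, mul_ite, ite_mul, zero_mul,
      mul_zero, Finset.sum_ite_eq, Finset.mem_univ, if_true]
    by_cases h : h₁ = h₂
    · subst h
      simp only [if_pos rfl]
      refine Finset.sum_congr rfl fun k _ => ?_
      rw [Finset.sum_eq_single k]
      · rw [if_pos rfl, if_pos rfl]
        congr 2
        group
      · intro b _ hb
        simp [Ne.symm hb]
      · simp
    · rw [if_neg h]
      refine (Finset.sum_eq_zero fun k _ => Finset.sum_eq_zero fun b _ => ?_).symm
      split_ifs with h1 h2
      · subst h2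
        exact absurd (mul_left_cancel h1) h
      all_goals rfl
  · funext p
    obtain ⟨⟨g₁, h₁⟩, ⟨g₂, h₂⟩⟩ := p
    simp only [Delta, eta, eta2]
    split_ifs <;> simp_all
  · intro x; funext t
    obtain ⟨⟨g₁, h₁⟩, ⟨g₂, h₂⟩, ⟨g₃, h₃⟩⟩ := t
    simp only [DeltaOne, DeltaTwo, Delta, mul_assoc]
    split_ifs <;> simp_all
  · intro x y; simp [eps, Finset.sum_add_distrib]
  · intro c x; simp [eps, Finset.mul_sum]
  · intro x y
    simp only [eps, qmul, mul_one, inv_mul_cancel]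
    rw [Finset.sum_comm, Finset.sum_mul]
    refine Finset.sum_congr rfl fun k _ => ?_
    rw [← Finset.mul_sum]
    congr 1
    exact Fintype.sum_equiv (Equiv.mulLeft k⁻¹) _ (fun h => y (1, h)) fun h => rfl
  · simp [eps, eta]
  · intro x
    constructor <;> funext q
    · simp only [epsL, Delta]
      simp [Finset.sum_ite_eq', one_mul]
    · simp only [epsR, Delta]
      simp [Finset.sum_ite_eq, mul_one]


end QuantumDoubleStmt4
end

section
/- The R-matrix of the quantum double D(G) satisfies the quantum Yang–Baxter equation in D(G)^{⊗3}: R₁₂·R₁₃·R₂₃ = R₂₃·R₁₃·R₁₂, where R₁₂ = R ⊗ η, R₂₃ = η ⊗ R, and R₁₃ = Σ_{g,k∈G} (k,g) ⊗ η ⊗ (g,1). -/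
/-
The quantum double `D(G)` of a finite group `G` is modeled as the function space
`(G × G) → ℂ`; the triple tensor product `D(G)⊗D(G)⊗D(G)` is modeled as
`((G×G) × (G×G) × (G×G)) → ℂ` (via `δ_p ⊗ δ_q ⊗ δ_r ↦ δ_{(p,q,r)}`).

* `qmul3` : componentwise multiplication on the threefold tensor product, induced by
  the multiplication `(g₁,h₁)·(g₂,h₂) = δ_{g₁,h₁g₂h₁⁻¹}(g₁,h₁h₂)` of `D(G)`.
* `eta` : the unit `η = Σ_k (k,1)`.
* `Rmat` : the R-matrix `R = Σ_{g,k} (k,g) ⊗ (g,1)`, i.e. `R((a,b),(c,d)) = δ_{d,1}δ_{c,b}`.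
* `R12 = R ⊗ η`, `R23 = η ⊗ R`, `R13 = Σ_{g,k} (k,g) ⊗ η ⊗ (g,1)`.
-/

namespace QuantumDoubleStmt8

variable {G : Type} [Group G] [Fintype G] [DecidableEq G]

noncomputable def eta : (G × G) → ℂ := fun p => if p.2 = 1 then 1 else 0

noncomputable def qmul3 (x y : ((G × G) × (G × G) × (G × G)) → ℂ) :
    ((G × G) × (G × G) × (G × G)) → ℂ :=
  fun t => ∑ k₁ : G, ∑ k₂ : G, ∑ k₃ : G,
    x ((t.1.1, k₁), (t.2.1.1, k₂), (t.2.2.1, k₃)) *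
      y ((k₁⁻¹ * t.1.1 * k₁, k₁⁻¹ * t.1.2),
         (k₂⁻¹ * t.2.1.1 * k₂, k₂⁻¹ * t.2.1.2),
         (k₃⁻¹ * t.2.2.1 * k₃, k₃⁻¹ * t.2.2.2))

noncomputable def Rmat : ((G × G) × (G × G)) → ℂ :=
  fun p => if p.2.2 = 1 ∧ p.2.1 = p.1.2 then 1 else 0

noncomputable def R12 : ((G × G) × (G × G) × (G × G)) → ℂ :=
  fun t => Rmat (t.1, t.2.1) * eta t.2.2

noncomputable def R23 : ((G × G) × (G × G) × (G × G)) → ℂ :=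
  fun t => eta t.1 * Rmat (t.2.1, t.2.2)

noncomputable def R13 : ((G × G) × (G × G) × (G × G)) → ℂ :=
  fun t => Rmat (t.1, t.2.2) * eta t.2.1


lemma A_eval : qmul3 (R12 (G := G)) R13 =
    fun t => if t.2.1.2 = 1 ∧ t.2.2.2 = 1 ∧ t.2.2.1 = t.2.1.1⁻¹ * t.1.2 then 1 else 0 := by
  funext t
  obtain ⟨⟨a,b⟩,⟨c,d⟩,⟨e,f⟩⟩ := t
  simp only [qmul3, R12, R13, Rmat, eta]
  simp only [ite_and, mul_ite, ite_mul, mul_zero, zero_mul, mul_one, one_mul,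
    Finset.sum_ite_eq, Finset.sum_ite_eq']
  rw [Fintype.sum_eq_single c (fun x hx => by simp [Ne.symm hx]),
      Fintype.sum_eq_single (1:G) (fun x hx => by simp [hx]),
      Fintype.sum_eq_single (1:G) (fun x hx => by simp [hx])]
  simp [eq_comm, and_comm]

lemma B_eval : qmul3 (R23 (G := G)) R13 =
    fun t => if t.2.2.2 = 1 ∧ t.2.2.1 = t.1.2 ∧ t.2.1.2 = t.2.2.1 then 1 else 0 := by
  funext t
  obtain ⟨⟨a,b⟩,⟨c,d⟩,⟨e,f⟩⟩ := t
  simp only [qmul3, R13, R23, Rmat, eta]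
  simp only [ite_and, mul_ite, ite_mul, mul_zero, zero_mul, mul_one, one_mul,
    Finset.sum_ite_eq, Finset.sum_ite_eq']
  rw [Fintype.sum_eq_single (1:G) (fun x hx => by simp [hx]),
      Fintype.sum_eq_single e (fun x hx => by simp [Ne.symm hx]),
      Fintype.sum_eq_single (1:G) (fun x hx => by simp [hx])]
  by_cases hf : f = 1 <;> by_cases hb : b = e <;> by_cases hd : d = e <;>
    simp_all [inv_mul_eq_one, eq_comm]

lemma LHS_eval : qmul3 (qmul3 (R12 (G := G)) R13) R23 =
    fun t => if t.1.2 = t.2.1.1 * t.2.2.1 ∧ t.2.1.2 = t.2.2.1 ∧ t.2.2.2 = 1 then 1 else 0 := by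
  rw [A_eval]
  funext t
  obtain ⟨⟨a,b⟩,⟨c,d⟩,⟨e,f⟩⟩ := t
  simp only [qmul3, R23, Rmat, eta]
  simp only [ite_and, mul_ite, ite_mul, mul_zero, zero_mul, mul_one, one_mul,
    Finset.sum_ite_eq, Finset.sum_ite_eq']
  rw [Fintype.sum_eq_single (c*e) (fun x hx => by
        simp [hx, Ne.symm hx, eq_inv_mul_iff_mul_eq]),
      Fintype.sum_eq_single (1:G) (fun x hx => by simp [hx]),
      Fintype.sum_eq_single (1:G) (fun x hx => by simp [hx])]
  by_cases h1 : b = c * e <;> by_cases h2 : d = e <;> by_cases h3 : f = 1 <;>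
    simp_all [← mul_inv_rev, inv_mul_eq_one, eq_comm, eq_inv_mul_iff_mul_eq]

lemma RHS_eval : qmul3 (qmul3 (R23 (G := G)) R13) R12 =
    fun t => if t.1.2 = t.2.1.1 * t.2.2.1 ∧ t.2.1.2 = t.2.2.1 ∧ t.2.2.2 = 1 then 1 else 0 := by
  rw [B_eval]
  funext t
  obtain ⟨⟨a,b⟩,⟨c,d⟩,⟨e,f⟩⟩ := t
  simp only [qmul3, R12, Rmat, eta]
  simp only [ite_and, mul_ite, ite_mul, mul_zero, zero_mul, mul_one, one_mul,
    Finset.sum_ite_eq, Finset.sum_ite_eq']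
  rw [Fintype.sum_eq_single e (fun x hx => by
        simp [hx, Ne.symm hx]),
      Fintype.sum_eq_single e (fun x hx => by simp [hx, Ne.symm hx]),
      Fintype.sum_eq_single (1:G) (fun x hx => by simp [hx])]
  by_cases h1 : b = c * e <;> by_cases h2 : d = e <;> by_cases h3 : f = 1 <;>
    simp_all [mul_inv_eq_iff_eq_mul, inv_mul_eq_iff_eq_mul, eq_comm, mul_assoc]

/-- The R-matrix of the quantum double `D(G)` satisfies the quantum Yang–Baxter equation
in `D(G)^{⊗3}`: `R₁₂·R₁₃·R₂₃ = R₂₃·R₁₃·R₁₂`. -/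
theorem quantum_double_yang_baxter :
    qmul3 (qmul3 (R12 (G := G)) R13) R23 = qmul3 (qmul3 R23 R13) R12 := by
  rw [LHS_eval, RHS_eval]

end QuantumDoubleStmt8
end

section
/- Let A be a unital complex *-algebra, let {F^{a,b}}_{a,b∈G} be a ribbon multiplet family over A, and let D be an n-dimensional unitary representation of the quantum double D(G). Then the ribbon multiplet 𝐅^D = Σ_{a,b∈G} F^{a,b} ⊗ D(a,b) is a unitary element of M_n(A): 𝐅^D·(𝐅^D)* = (𝐅^D)*·𝐅^D = 1. -/
/-
`G` is a finite group.  Representations of the quantum double `D(G)` are described by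
their values on the basis elements `(g,h)`: a unitary representation of `D(G)` on `ℂ^I`
is a function `D : G × G → Matrix I I ℂ` such that the bilinear extension is a unital
ℂ-algebra homomorphism (`rel_mul`, `rel_one`) which is star-preserving (`rel_star`;
recall `(g,h)* = (h⁻¹gh, h⁻¹)` in `D(G)`, and `star` on matrices is conjugate-transpose).

A ribbon multiplet family over a unital complex *-algebra `A` is a family
`F : G → G → A` satisfying the algebraic relations of ribbon operators on a finite
ribbon in Kitaev's quantum double model.

`bF F D = Σ_{a,b} F a b ⊗ D(a,b)` is the associated ribbon multiplet, an `A`-valued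
matrix with entries `(bF F D) u v = Σ_{a,b} D(a,b) u v • F a b`.
-/

namespace QuantumDoubleStmt11

/-- A unitary representation of the quantum double `D(G)`, described on basis elements. -/
structure URep (G : Type) [Group G] [Fintype G] [DecidableEq G]
    (I : Type) [Fintype I] [DecidableEq I] where
  D : G × G → Matrix I I ℂ
  rel_mul : ∀ p q : G × G,
    D p * D q = if p.1 = p.2 * q.1 * p.2⁻¹ then D (p.1, p.2 * q.2) else 0
  rel_one : ∑ k : G, D (k, (1 : G)) = 1
  rel_star : ∀ g h : G, D (h⁻¹ * g * h, h⁻¹) = star (D (g, h))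

/-- A ribbon multiplet family over a unital complex *-algebra `A`. -/
structure RibbonFamily (G : Type) [Group G] [Fintype G] [DecidableEq G]
    (A : Type) [Ring A] [Algebra ℂ A] [StarRing A] [StarModule ℂ A] where
  F : G → G → A
  rel_mul : ∀ a₁ b₁ a₂ b₂ : G,
    F a₁ b₁ * F a₂ b₂ = if b₁ = b₂ then F (a₁ * a₂) b₁ else 0
  rel_star : ∀ a b : G, star (F a b) = F a⁻¹ b
  rel_sum_one : ∑ b : G, F (1 : G) b = 1

/-- The ribbon multiplet `𝐅^D = Σ_{a,b} F^{a,b} ⊗ D(a,b) ∈ M_I(A)`. -/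
noncomputable def bF {G : Type} [Group G] [Fintype G] [DecidableEq G]
    {A : Type} [Ring A] [Algebra ℂ A] {I : Type} [Fintype I]
    (F : G → G → A) (D : G × G → Matrix I I ℂ) : Matrix I I A :=
  Matrix.of fun u v => ∑ a : G, ∑ b : G, D (a, b) u v • F a b

/-- Let `A` be a unital complex *-algebra, `{F^{a,b}}` a ribbon multiplet family over `A`,
and `D` an `n`-dimensional unitary representation of the quantum double `D(G)`.  Then
the ribbon multiplet `𝐅^D = Σ_{a,b} F^{a,b} ⊗ D(a,b)` is a unitary element of `M_n(A)`:
`𝐅^D·(𝐅^D)* = (𝐅^D)*·𝐅^D = 1`. -/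
theorem ribbon_multiplet_unitary
    (G : Type) [Group G] [Fintype G] [DecidableEq G]
    (A : Type) [Ring A] [Algebra ℂ A] [StarRing A] [StarModule ℂ A]
    (R : RibbonFamily G A) (n : ℕ) (D : URep G (Fin n)) :
    bF R.F D.D * star (bF R.F D.D) = 1 ∧
    star (bF R.F D.D) * bF R.F D.D = 1 := by
  have hDs : ∀ g h : G, star (D.D (g, h)) = D.D (h⁻¹ * g * h, h⁻¹) :=
    fun g h => (D.rel_star g h).symm
  -- key matrix identities
  have key1 : ∀ a c b : G,
      D.D (a, b) * star (D.D (c, b)) = if a = c then D.D (a, 1) else 0 := by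
    intro a c b
    rw [hDs, D.rel_mul]
    have h1 : b * (b⁻¹ * c * b) * b⁻¹ = c := by group
    simp only [h1, mul_inv_cancel]
  have key2 : ∀ a c b : G,
      star (D.D (a, b)) * D.D (c, b) = if a = c then D.D (b⁻¹ * a * b, 1) else 0 := by
    intro a c b
    rw [hDs, D.rel_mul]
    have h1 : (b⁻¹ * a * b = b⁻¹ * c * b⁻¹⁻¹) ↔ (a = c) := by
      rw [inv_inv]
      constructor
      · intro h; exact mul_left_cancel (mul_right_cancel h)
      · intro h; rw [h]
    simp only [inv_mul_cancel]
    rw [if_congr h1 rfl rfl]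
  constructor
  · ext u v
    rw [Matrix.mul_apply]
    simp only [bF, Matrix.of_apply, Matrix.star_apply, star_sum, star_smul, R.rel_star,
      Finset.sum_mul, Finset.mul_sum, smul_mul_smul_comm, R.rel_mul, smul_ite, smul_zero,
      Finset.sum_ite_eq, Finset.sum_ite_eq', Finset.mem_univ, if_true]
    have key1' : ∀ a c b : G,
        (∑ w, D.D (a, b) u w * star (D.D (c, b) v w))
          = if a = c then D.D (a, 1) u v else 0 := by
      intro a c b
      have : (∑ w, D.D (a, b) u w * star (D.D (c, b) v w))
          = (D.D (a, b) * star (D.D (c, b))) u v := by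
        rw [Matrix.mul_apply]
        simp [Matrix.star_apply]
      rw [this, key1]
      split_ifs <;> simp
    rw [Finset.sum_comm]
    conv_lhs => enter [2, c]; rw [Finset.sum_comm]
    conv_lhs => enter [2, c, 2, b]; rw [Finset.sum_comm]
    simp only [← Finset.sum_smul, key1', ite_smul, zero_smul, Finset.sum_ite_eq',
      Finset.mem_univ, if_true, mul_inv_cancel]
    simp only [← Finset.smul_sum, R.rel_sum_one]
    rw [← Finset.sum_smul, ← Matrix.sum_apply, D.rel_one]
    simp [Matrix.one_apply, ite_smul]
  · ext u v
    rw [Matrix.mul_apply]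
    simp only [bF, Matrix.of_apply, Matrix.star_apply, star_sum, star_smul, R.rel_star,
      Finset.sum_mul, Finset.mul_sum, smul_mul_smul_comm, R.rel_mul, smul_ite, smul_zero,
      Finset.sum_ite_eq, Finset.sum_ite_eq', Finset.mem_univ, if_true]
    have key2' : ∀ a c b : G,
        (∑ w, star (D.D (a, b) w u) * D.D (c, b) w v)
          = if a = c then D.D (b⁻¹ * a * b, 1) u v else 0 := by
      intro a c b
      have : (∑ w, star (D.D (a, b) w u) * D.D (c, b) w v)
          = (star (D.D (a, b)) * D.D (c, b)) u v := by
        rw [Matrix.mul_apply]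
        simp [Matrix.star_apply]
      rw [this, key2]
      split_ifs <;> simp
    have hbij : ∀ b : G, (∑ c : G, D.D (b⁻¹ * c * b, 1) u v) = ∑ k : G, D.D (k, 1) u v := by
      intro b
      exact Fintype.sum_equiv ((Equiv.mulRight b).trans (Equiv.mulLeft b⁻¹)) _ _
        (fun c => by simp [mul_assoc])
    rw [Finset.sum_comm]
    conv_lhs => enter [2, c]; rw [Finset.sum_comm]
    conv_lhs => enter [2, c, 2, b]; rw [Finset.sum_comm]
    simp only [← Finset.sum_smul, key2', ite_smul, zero_smul, Finset.sum_ite_eq',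
      Finset.mem_univ, if_true, inv_mul_cancel]
    rw [Finset.sum_comm]
    simp only [← Finset.sum_smul, hbij, ← Matrix.sum_apply, D.rel_one]
    simp only [← Finset.smul_sum, R.rel_sum_one]
    simp [Matrix.one_apply, ite_smul]

end QuantumDoubleStmt11
end

section
/- Let A be a unital complex *-algebra, {F^{a,b}}_{a,b∈G} a ribbon multiplet family over A, and for each n-dimensional unitary representation D of the quantum double D(G) define μ^D: A → M_n(A) by μ^D(O) := 𝐅^D·(O ⊗ 1_n)·(𝐅^D)*. Then each μ^D is a unital *-homomorphism, and for unitary representations D₁, D₂ of dimensions n₁, n₂ one has μ^{D₁} ⊕ μ^{D₂} = μ^{D₁⊕D₂} and μ^{D₁} × μ^{D₂} = μ^{D₁×D₂}, where (μ^{D₁} × μ^{D₂})^{(u₁u₂),(v₁v₂)}(O) := μ^{D₁,u₁v₁}( μ^{D₂,u₂v₂}(O) ) and D₁×D₂ := (D₁ ⊗ D₂) ∘ Δ. -/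
/-
Setup as in Statements 11–12: unitary representations of the quantum double `D(G)` are
described by their values `D : G × G → Matrix I I ℂ` on the basis elements `(g,h)`; a
ribbon multiplet family over a unital complex *-algebra `A` is a family `F : G → G → A`
satisfying the ribbon operator relations; `bF F D = Σ_{a,b} F^{a,b} ⊗ D(a,b)` is the
associated ribbon multiplet.

`mu F D O = 𝐅^D · (O ⊗ 1_n) · (𝐅^D)*` is the associated amplimorphism `A → M_n(A)`.
The direct sum of amplimorphisms is realized block-diagonally on `Fin n₁ ⊕ Fin n₂`, and
their product `(μ₁ × μ₂)^{(u₁u₂),(v₁v₂)}(O) = μ₁^{u₁v₁}(μ₂^{u₂v₂}(O))` on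
`Fin n₁ × Fin n₂`; `D₁ × D₂ = (D₁ ⊗ D₂) ∘ Δ` is the monoidal product of
representations, on basis elements `(D₁ × D₂)(g,h) = Σ_k D₁(k,h) ⊗ D₂(k⁻¹g,h)`.
-/

namespace QuantumDoubleStmt13

structure URep (G : Type) [Group G] [Fintype G] [DecidableEq G]
    (I : Type) [Fintype I] [DecidableEq I] where
  D : G × G → Matrix I I ℂ
  rel_mul : ∀ p q : G × G,
    D p * D q = if p.1 = p.2 * q.1 * p.2⁻¹ then D (p.1, p.2 * q.2) else 0
  rel_one : ∑ k : G, D (k, (1 : G)) = 1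
  rel_star : ∀ g h : G, D (h⁻¹ * g * h, h⁻¹) = star (D (g, h))

structure RibbonFamily (G : Type) [Group G] [Fintype G] [DecidableEq G]
    (A : Type) [Ring A] [Algebra ℂ A] [StarRing A] [StarModule ℂ A] where
  F : G → G → A
  rel_mul : ∀ a₁ b₁ a₂ b₂ : G,
    F a₁ b₁ * F a₂ b₂ = if b₁ = b₂ then F (a₁ * a₂) b₁ else 0
  rel_star : ∀ a b : G, star (F a b) = F a⁻¹ b
  rel_sum_one : ∑ b : G, F (1 : G) b = 1

noncomputable def bF {G : Type} [Group G] [Fintype G] [DecidableEq G]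
    {A : Type} [Ring A] [Algebra ℂ A] {I : Type} [Fintype I]
    (F : G → G → A) (D : G × G → Matrix I I ℂ) : Matrix I I A :=
  Matrix.of fun u v => ∑ a : G, ∑ b : G, D (a, b) u v • F a b

/-- The amplimorphism `μ^D(O) = 𝐅^D · (O ⊗ 1) · (𝐅^D)*`. -/
noncomputable def mu {G : Type} [Group G] [Fintype G] [DecidableEq G]
    {A : Type} [Ring A] [Algebra ℂ A] [StarRing A] [StarModule ℂ A]
    {I : Type} [Fintype I] [DecidableEq I]
    (F : G → G → A) (D : G × G → Matrix I I ℂ) (O : A) : Matrix I I A :=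
  bF F D * Matrix.diagonal (fun _ => O) * star (bF F D)

noncomputable def sumD {G I₁ I₂ : Type}
    (D₁ : G × G → Matrix I₁ I₁ ℂ) (D₂ : G × G → Matrix I₂ I₂ ℂ) :
    G × G → Matrix (I₁ ⊕ I₂) (I₁ ⊕ I₂) ℂ :=
  fun p => Matrix.fromBlocks (D₁ p) 0 0 (D₂ p)

noncomputable def tensorD {G : Type} [Group G] [Fintype G] {I₁ I₂ : Type}
    (D₁ : G × G → Matrix I₁ I₁ ℂ) (D₂ : G × G → Matrix I₂ I₂ ℂ) :
    G × G → Matrix (I₁ × I₂) (I₁ × I₂) ℂ :=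
  fun p => ∑ k : G, Matrix.kroneckerMap (· * ·) (D₁ (k, p.2)) (D₂ (k⁻¹ * p.1, p.2))

set_option linter.unusedSectionVars false

variable {G : Type} [Group G] [Fintype G] [DecidableEq G]
    {A : Type} [Ring A] [Algebra ℂ A] [StarRing A] [StarModule ℂ A]
    {I : Type} [Fintype I] [DecidableEq I]


set_option linter.unusedSectionVars false

lemma bF_apply (F : G → G → A) (D : G × G → Matrix I I ℂ) (u v : I) :
    bF F D u v = ∑ a : G, ∑ b : G, D (a, b) u v • F a b := rfl

lemma star_bF_apply (R : RibbonFamily G A) (D : G × G → Matrix I I ℂ) (u v : I) :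
    star (bF R.F D) u v = ∑ a : G, ∑ b : G, (starRingEnd ℂ) (D (a, b) v u) • R.F a⁻¹ b := by
  simp only [Matrix.star_apply, bF_apply, star_sum, star_smul, R.rel_star]
  rfl

lemma bF_mul_star_self (R : RibbonFamily G A) (D : URep G I) :
    bF R.F D.D * star (bF R.F D.D) = 1 := by
  ext u v
  rw [Matrix.mul_apply]
  calc ∑ w, bF R.F D.D u w * star (bF R.F D.D) w v
      = ∑ w, ∑ a : G, ∑ b : G, ∑ a' : G,
        (D.D (a, b) u w * (starRingEnd ℂ) (D.D (a', b) v w)) • R.F (a * a'⁻¹) b := by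
        refine Finset.sum_congr rfl fun w _ => ?_
        rw [bF_apply, star_bF_apply, Finset.sum_mul_sum]
        refine Finset.sum_congr rfl fun a _ => ?_
        rw [Finset.sum_comm]
        refine Finset.sum_congr rfl fun b _ => ?_
        rw [Finset.sum_mul_sum]
        refine Finset.sum_congr rfl fun a' _ => ?_
        simp only [smul_mul_smul_comm, R.rel_mul, smul_ite, smul_zero]
        simp
    _ = ∑ a : G, ∑ b : G, ∑ a' : G,
        ((D.D (a, b) * star (D.D (a', b))) u v) • R.F (a * a'⁻¹) b := by
        rw [Finset.sum_comm]
        refine Finset.sum_congr rfl fun a _ => ?_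
        rw [Finset.sum_comm]
        refine Finset.sum_congr rfl fun b _ => ?_
        rw [Finset.sum_comm]
        refine Finset.sum_congr rfl fun a' _ => ?_
        rw [← Finset.sum_smul, Matrix.mul_apply]
        simp only [Matrix.star_apply, Complex.star_def]
    _ = ∑ a : G, ∑ b : G, (D.D (a, 1) u v) • R.F 1 b := by
        refine Finset.sum_congr rfl fun a _ => Finset.sum_congr rfl fun b _ => ?_
        have hst : ∀ a' : G, star (D.D (a', b)) = D.D (b⁻¹ * a' * b, b⁻¹) :=
          fun a' => (D.rel_star a' b).symm
        have hgrp : ∀ a' : G, b * (b⁻¹ * a' * b) * b⁻¹ = a' := fun a' => by group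
        simp only [hst, D.rel_mul, hgrp, mul_inv_cancel,
          apply_ite (fun M : Matrix I I ℂ => M u v), Matrix.zero_apply,
          ite_smul, zero_smul]
        rw [Finset.sum_ite_eq Finset.univ a]
        simp
    _ = (1 : Matrix I I A) u v := by
        rw [Finset.sum_comm]
        calc ∑ b : G, ∑ a : G, D.D (a, 1) u v • R.F 1 b
            = ∑ b : G, ((1 : Matrix I I ℂ) u v) • R.F 1 b := by
              refine Finset.sum_congr rfl fun b _ => ?_
              rw [← Finset.sum_smul, ← Matrix.sum_apply, D.rel_one]
          _ = ((1 : Matrix I I ℂ) u v) • (1 : A) := by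
              rw [← Finset.smul_sum, R.rel_sum_one]
          _ = (1 : Matrix I I A) u v := by
              by_cases h : u = v <;> simp [Matrix.one_apply, h]


lemma star_self_mul_bF (R : RibbonFamily G A) (D : URep G I) :
    star (bF R.F D.D) * bF R.F D.D = 1 := by
  ext u v
  rw [Matrix.mul_apply]
  calc ∑ w, star (bF R.F D.D) u w * bF R.F D.D w v
      = ∑ w, ∑ a : G, ∑ b : G, ∑ a' : G,
        ((starRingEnd ℂ) (D.D (a, b) w u) * D.D (a', b) w v) • R.F (a⁻¹ * a') b := by
        refine Finset.sum_congr rfl fun w _ => ?_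
        rw [bF_apply, star_bF_apply, Finset.sum_mul_sum]
        refine Finset.sum_congr rfl fun a _ => ?_
        rw [Finset.sum_comm]
        refine Finset.sum_congr rfl fun b _ => ?_
        rw [Finset.sum_mul_sum]
        refine Finset.sum_congr rfl fun a' _ => ?_
        simp only [smul_mul_smul_comm, R.rel_mul, smul_ite, smul_zero]
        simp
    _ = ∑ a : G, ∑ b : G, ∑ a' : G,
        ((star (D.D (a, b)) * D.D (a', b)) u v) • R.F (a⁻¹ * a') b := by
        rw [Finset.sum_comm]
        refine Finset.sum_congr rfl fun a _ => ?_
        rw [Finset.sum_comm]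
        refine Finset.sum_congr rfl fun b _ => ?_
        rw [Finset.sum_comm]
        refine Finset.sum_congr rfl fun a' _ => ?_
        rw [← Finset.sum_smul, Matrix.mul_apply]
        simp only [Matrix.star_apply, Complex.star_def]
    _ = ∑ a : G, ∑ b : G, (D.D (b⁻¹ * a * b, 1) u v) • R.F 1 b := by
        refine Finset.sum_congr rfl fun a _ => Finset.sum_congr rfl fun b _ => ?_
        have hst : ∀ a : G, star (D.D (a, b)) = D.D (b⁻¹ * a * b, b⁻¹) :=
          fun a => (D.rel_star a b).symm
        have hcond : ∀ a' : G, (b⁻¹ * a * b = b⁻¹ * a' * b⁻¹⁻¹) = (a = a') := by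
          intro a'
          simp [mul_left_cancel_iff, mul_right_cancel_iff]
        simp only [hst, D.rel_mul, hcond, inv_mul_cancel,
          apply_ite (fun M : Matrix I I ℂ => M u v), Matrix.zero_apply,
          ite_smul, zero_smul]
        rw [Finset.sum_ite_eq Finset.univ a]
        simp
    _ = (1 : Matrix I I A) u v := by
        rw [Finset.sum_comm]
        calc ∑ b : G, ∑ a : G, D.D (b⁻¹ * a * b, 1) u v • R.F 1 b
            = ∑ b : G, ((1 : Matrix I I ℂ) u v) • R.F 1 b := by
              refine Finset.sum_congr rfl fun b _ => ?_
              rw [← Finset.sum_smul, ← Matrix.sum_apply]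
              have : ∑ a : G, D.D (b⁻¹ * a * b, 1) = ∑ c : G, D.D (c, 1) :=
                Fintype.sum_equiv
                  ⟨fun a => b⁻¹ * a * b, fun c => b * c * b⁻¹,
                    fun a => by group, fun c => by group⟩
                  _ _ (fun a => rfl)
              rw [this, D.rel_one]
          _ = ((1 : Matrix I I ℂ) u v) • (1 : A) := by
              rw [← Finset.smul_sum, R.rel_sum_one]
          _ = (1 : Matrix I I A) u v := by
              by_cases h : u = v <;> simp [Matrix.one_apply, h]


lemma mu_mul (R : RibbonFamily G A) (D : URep G I) (O₁ O₂ : A) :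
    mu R.F D.D (O₁ * O₂) = mu R.F D.D O₁ * mu R.F D.D O₂ := by
  unfold mu
  rw [show (Matrix.diagonal (fun _ : I => O₁ * O₂))
      = Matrix.diagonal (fun _ : I => O₁) * Matrix.diagonal (fun _ : I => O₂) from
    (Matrix.diagonal_mul_diagonal _ _).symm]
  simp only [Matrix.mul_assoc]
  rw [← Matrix.mul_assoc (star (bF R.F D.D)) (bF R.F D.D), star_self_mul_bF R D, Matrix.one_mul]

lemma mu_add (R : RibbonFamily G A) (D : URep G I) (O₁ O₂ : A) :
    mu R.F D.D (O₁ + O₂) = mu R.F D.D O₁ + mu R.F D.D O₂ := by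
  unfold mu
  rw [show (Matrix.diagonal (fun _ : I => O₁ + O₂))
      = Matrix.diagonal (fun _ : I => O₁) + Matrix.diagonal (fun _ : I => O₂) from
    (Matrix.diagonal_add _ _).symm]
  rw [Matrix.mul_add, Matrix.add_mul]

lemma mu_smul (R : RibbonFamily G A) (D : URep G I) (c : ℂ) (O : A) :
    mu R.F D.D (c • O) = c • mu R.F D.D O := by
  unfold mu
  rw [show (Matrix.diagonal (fun _ : I => c • O))
      = c • Matrix.diagonal (fun _ : I => O) from by
    rw [← Matrix.diagonal_smul]; rfl]
  rw [Matrix.mul_smul, Matrix.smul_mul]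

lemma mu_one (R : RibbonFamily G A) (D : URep G I) :
    mu R.F D.D (1 : A) = 1 := by
  unfold mu
  rw [Matrix.diagonal_one, Matrix.mul_one, bF_mul_star_self R D]

lemma mu_star (R : RibbonFamily G A) (D : URep G I) (O : A) :
    mu R.F D.D (star O) = star (mu R.F D.D O) := by
  unfold mu
  rw [star_mul, star_mul, star_star]
  rw [show star (Matrix.diagonal (fun _ : I => O))
      = Matrix.diagonal (fun _ : I => star O) from by
    rw [Matrix.star_eq_conjTranspose, Matrix.diagonal_conjTranspose]; rfl]
  rw [Matrix.mul_assoc]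


variable {I₁ I₂ : Type} [Fintype I₁] [DecidableEq I₁] [Fintype I₂] [DecidableEq I₂]

lemma bF_sumD (F : G → G → A)
    (D₁ : G × G → Matrix I₁ I₁ ℂ) (D₂ : G × G → Matrix I₂ I₂ ℂ) :
    bF F (sumD D₁ D₂) = Matrix.fromBlocks (bF F D₁) 0 0 (bF F D₂) := by
  ext u v
  rcases u with u | u <;> rcases v with v | v <;>
    simp [bF_apply, sumD]

lemma diagonal_sum_type (O : A) :
    (Matrix.diagonal (fun _ : I₁ ⊕ I₂ => O))
      = Matrix.fromBlocks (Matrix.diagonal (fun _ : I₁ => O)) 0 0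
          (Matrix.diagonal (fun _ : I₂ => O)) := by
  ext u v
  rcases u with u | u <;> rcases v with v | v <;>
    simp [Matrix.diagonal_apply]

lemma mu_sumD (R : RibbonFamily G A)
    (D₁ : G × G → Matrix I₁ I₁ ℂ) (D₂ : G × G → Matrix I₂ I₂ ℂ) (O : A) :
    mu R.F (sumD D₁ D₂) O =
      Matrix.fromBlocks (mu R.F D₁ O) 0 0 (mu R.F D₂ O) := by
  unfold mu
  rw [bF_sumD, diagonal_sum_type, Matrix.star_eq_conjTranspose,
    Matrix.fromBlocks_conjTranspose, Matrix.fromBlocks_multiply, Matrix.fromBlocks_multiply]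
  simp [Matrix.star_eq_conjTranspose]


lemma sum_rot {α β γ M : Type*} [Fintype α] [Fintype β] [Fintype γ] [AddCommMonoid M]
    (f : α → β → γ → M) :
    (∑ a : α, ∑ b : β, ∑ k : γ, f a b k) = ∑ k : γ, ∑ b : β, ∑ a : α, f a b k :=
  calc (∑ a : α, ∑ b : β, ∑ k : γ, f a b k)
      = ∑ a : α, ∑ k : γ, ∑ b : β, f a b k :=
        Finset.sum_congr rfl fun _ _ => Finset.sum_comm
    _ = ∑ k : γ, ∑ a : α, ∑ b : β, f a b k := Finset.sum_comm
    _ = ∑ k : γ, ∑ b : β, ∑ a : α, f a b k :=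
        Finset.sum_congr rfl fun _ _ => Finset.sum_comm

lemma bF_tensor (R : RibbonFamily G A)
    (D₁ : G × G → Matrix I₁ I₁ ℂ) (D₂ : G × G → Matrix I₂ I₂ ℂ)
    (u w : I₁ × I₂) :
    bF R.F (tensorD D₁ D₂) u w = bF R.F D₁ u.1 w.1 * bF R.F D₂ u.2 w.2 := by
  calc bF R.F (tensorD D₁ D₂) u w
      = ∑ a : G, ∑ b : G, ∑ k : G,
          (D₁ (k, b) u.1 w.1 * D₂ (k⁻¹ * a, b) u.2 w.2) • R.F a b := by
        rw [bF_apply]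
        refine Finset.sum_congr rfl fun a _ => Finset.sum_congr rfl fun b _ => ?_
        rw [show tensorD D₁ D₂ (a, b) u w
            = ∑ k : G, D₁ (k, b) u.1 w.1 * D₂ (k⁻¹ * a, b) u.2 w.2 from by
          simp [tensorD, Matrix.sum_apply]]
        rw [Finset.sum_smul]
    _ = ∑ k : G, ∑ b : G, ∑ a' : G,
          (D₁ (k, b) u.1 w.1 * D₂ (a', b) u.2 w.2) • R.F (k * a') b := by
        rw [sum_rot (fun a b k => (D₁ (k, b) u.1 w.1 * D₂ (k⁻¹ * a, b) u.2 w.2) • R.F a b)]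
        refine Finset.sum_congr rfl fun k _ => Finset.sum_congr rfl fun b _ => ?_
        exact Fintype.sum_equiv (Equiv.mulLeft k⁻¹) _ _ (fun a' => by
          simp [mul_inv_cancel_left])
    _ = bF R.F D₁ u.1 w.1 * bF R.F D₂ u.2 w.2 := by
        rw [bF_apply, bF_apply, Finset.sum_mul_sum]
        refine Finset.sum_congr rfl fun c _ => ?_
        rw [Finset.sum_comm]
        refine Finset.sum_congr rfl fun d _ => ?_
        rw [Finset.sum_mul_sum]
        refine Finset.sum_congr rfl fun a' _ => ?_
        simp only [smul_mul_smul_comm, R.rel_mul, smul_ite, smul_zero]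
        simp

lemma mu_apply (F : G → G → A) (D : G × G → Matrix I I ℂ) (O : A) (u v : I) :
    mu F D O u v = ∑ w : I, bF F D u w * O * star (bF F D v w) := by
  unfold mu
  rw [Matrix.mul_apply]
  exact Finset.sum_congr rfl fun w _ => by
    rw [Matrix.mul_diagonal, Matrix.star_apply]

lemma mu_tensor (R : RibbonFamily G A)
    (D₁ : G × G → Matrix I₁ I₁ ℂ) (D₂ : G × G → Matrix I₂ I₂ ℂ) (O : A)
    (u v : I₁ × I₂) :
    mu R.F (tensorD D₁ D₂) O u v
      = mu R.F D₁ (mu R.F D₂ O u.2 v.2) u.1 v.1 := by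
  rw [mu_apply, mu_apply]
  calc ∑ w : I₁ × I₂, bF R.F (tensorD D₁ D₂) u w * O * star (bF R.F (tensorD D₁ D₂) v w)
      = ∑ w₁ : I₁, ∑ w₂ : I₂,
          bF R.F D₁ u.1 w₁ * (bF R.F D₂ u.2 w₂ * O * star (bF R.F D₂ v.2 w₂))
            * star (bF R.F D₁ v.1 w₁) := by
        rw [Fintype.sum_prod_type]
        refine Finset.sum_congr rfl fun w₁ _ => Finset.sum_congr rfl fun w₂ _ => ?_
        rw [bF_tensor, bF_tensor, star_mul]
        noncomm_ring
    _ = ∑ w₁ : I₁, bF R.F D₁ u.1 w₁ * (mu R.F D₂ O u.2 v.2) * star (bF R.F D₁ v.1 w₁) := by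
        refine Finset.sum_congr rfl fun w₁ _ => ?_
        rw [mu_apply, Finset.mul_sum, Finset.sum_mul]

/-- Let `A` be a unital complex *-algebra, `{F^{a,b}}` a ribbon multiplet family over `A`,
and for each `n`-dimensional unitary representation `D` of `D(G)` define
`μ^D(O) = 𝐅^D·(O ⊗ 1_n)·(𝐅^D)*`.  Then each `μ^D` is a unital *-homomorphism, and for
unitary representations `D₁, D₂` of dimensions `n₁, n₂` one has
`μ^{D₁} ⊕ μ^{D₂} = μ^{D₁⊕D₂}` and `μ^{D₁} × μ^{D₂} = μ^{D₁×D₂}`. -/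
theorem ribbon_amplimorphism
    (G : Type) [Group G] [Fintype G] [DecidableEq G]
    (A : Type) [Ring A] [Algebra ℂ A] [StarRing A] [StarModule ℂ A]
    (R : RibbonFamily G A) (n n₁ n₂ : ℕ)
    (D : URep G (Fin n)) (D₁ : URep G (Fin n₁)) (D₂ : URep G (Fin n₂)) :
    -- μ^D is a unital *-homomorphism:
    (∀ O₁ O₂ : A, mu R.F D.D (O₁ * O₂) = mu R.F D.D O₁ * mu R.F D.D O₂) ∧
    (∀ O₁ O₂ : A, mu R.F D.D (O₁ + O₂) = mu R.F D.D O₁ + mu R.F D.D O₂) ∧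
    (∀ (c : ℂ) (O : A), mu R.F D.D (c • O) = c • mu R.F D.D O) ∧
    (mu R.F D.D (1 : A) = 1) ∧
    (∀ O : A, mu R.F D.D (star O) = star (mu R.F D.D O)) ∧
    -- direct sums and monoidal products:
    (∀ O : A, mu R.F (sumD D₁.D D₂.D) O =
      Matrix.fromBlocks (mu R.F D₁.D O) 0 0 (mu R.F D₂.D O)) ∧
    (∀ O : A, mu R.F (tensorD D₁.D D₂.D) O =
      Matrix.of fun (u v : Fin n₁ × Fin n₂) =>
        mu R.F D₁.D (mu R.F D₂.D O u.2 v.2) u.1 v.1) := by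
  refine ⟨mu_mul R D, mu_add R D, mu_smul R D, mu_one R D,
    fun O => mu_star R D O, fun O => mu_sumD R D₁.D D₂.D O, fun O => ?_⟩
  ext u v
  rw [Matrix.of_apply]
  exact mu_tensor R D₁.D D₂.D O u v

end QuantumDoubleStmt13
end

section
/- Let M, N, P be left modules over the quantum double D(G), with tensor products of modules given the D(G)-module structure via the coproduct Δ, and for any two D(G)-modules X, Y let c_{X,Y}: X ⊗ Y → Y ⊗ X be the map c_{X,Y}(x ⊗ y) := Σ_{g,k∈G} ((g,1)·y) ⊗ ((k,g)·x). Then the braid relation holds: (c_{N,P} ⊗ id_M) ∘ (id_N ⊗ c_{M,P}) ∘ (c_{M,N} ⊗ id_P) = (id_P ⊗ c_{M,N}) ∘ (c_{M,P} ⊗ id_N) ∘ (id_M ⊗ c_{N,P}) as ℂ-linear maps M ⊗ N ⊗ P → P ⊗ N ⊗ M (with the standard associativity identifications of iterated tensor products). -/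
open scoped TensorProduct

/-
Setup as in Statement 15: a left module over the quantum double `D(G)` of a finite
group `G` is described by the action of the basis elements `(g,h)` of `D(G)`
(`DGAction`); tensor products of modules carry the `D(G)`-action obtained from the
coproduct `Δ(g,h) = Σ_k (k,h) ⊗ (k⁻¹g,h)`; and for `D(G)`-modules `X`, `Y` the braiding
`c_{X,Y} : X ⊗ Y → Y ⊗ X` is `c_{X,Y}(x ⊗ y) = Σ_{g,k} ((g,1)·y) ⊗ ((k,g)·x)`
(acting with the R-matrix `R = Σ_{g,k} (k,g) ⊗ (g,1)` and flipping the factors).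

The braid relation is stated as an equality of ℂ-linear maps
`(M ⊗ N) ⊗ P → (P ⊗ N) ⊗ M`, with the standard associativity identifications
`TensorProduct.assoc` inserted between the elementary steps.
-/

namespace QuantumDoubleStmt16

structure DGAction (G : Type) [Group G] [Fintype G] [DecidableEq G]
    (M : Type) [AddCommGroup M] [Module ℂ M] where
  act : G × G → M →ₗ[ℂ] M
  rel_mul : ∀ p q : G × G,
    act p ∘ₗ act q = if p.1 = p.2 * q.1 * p.2⁻¹ then act (p.1, p.2 * q.2) else 0
  rel_one : (∑ k : G, act (k, (1 : G))) = LinearMap.id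

variable {G : Type} [Group G] [Fintype G] [DecidableEq G]
variable {M N P : Type} [AddCommGroup M] [Module ℂ M] [AddCommGroup N] [Module ℂ N]
  [AddCommGroup P] [Module ℂ P]

/-- The braiding `c_{M,N}(m ⊗ n) = Σ_{g,k} ((g,1)·n) ⊗ ((k,g)·m)`. -/
noncomputable def braidMap (αM : DGAction G M) (αN : DGAction G N) :
    (M ⊗[ℂ] N) →ₗ[ℂ] (N ⊗[ℂ] M) :=
  ∑ g : G, ∑ k : G,
    (TensorProduct.comm ℂ M N).toLinearMap ∘ₗ
      TensorProduct.map (αM.act (k, g)) (αN.act (g, (1 : G)))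

set_option linter.unusedSectionVars false

lemma act_act (α : DGAction G M) (p q : G × G) (m : M) :
    α.act p (α.act q m) =
      if p.1 = p.2 * q.1 * p.2⁻¹ then α.act (p.1, p.2 * q.2) m else 0 := by
  have h := congrArg (fun f => f m) (α.rel_mul p q)
  simpa [apply_ite (fun f : M →ₗ[ℂ] M => f m)] using h

lemma braidMap_tmul (αM : DGAction G M) (αN : DGAction G N) (m : M) (n : N) :
    braidMap αM αN (m ⊗ₜ[ℂ] n) =
      ∑ g : G, ∑ k : G, (αN.act (g, 1) n) ⊗ₜ[ℂ] (αM.act (k, g) m) := by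
  simp [braidMap, LinearMap.sum_apply]

lemma tmul_ite {A B : Type} [AddCommGroup A] [Module ℂ A] [AddCommGroup B] [Module ℂ B]
    (a : A) (c : Prop) [Decidable c] (b b' : B) :
    a ⊗ₜ[ℂ] (if c then b else b') = if c then a ⊗ₜ[ℂ] b else a ⊗ₜ[ℂ] b' := by
  split <;> rfl

lemma ite_tmul' {A B : Type} [AddCommGroup A] [Module ℂ A] [AddCommGroup B] [Module ℂ B]
    (a a' : A) (c : Prop) [Decidable c] (b : B) :
    (if c then a else a') ⊗ₜ[ℂ] b = if c then a ⊗ₜ[ℂ] b else a' ⊗ₜ[ℂ] b := by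
  split <;> rfl

lemma sum_if_const {β : Type} [AddCommMonoid β] (c : Prop) [Decidable c] (f : G → β) :
    (∑ j : G, if c then f j else 0) = if c then ∑ j : G, f j else 0 := by
  split <;> simp

/-- Let `M`, `N`, `P` be left `D(G)`-modules.  The braiding maps `c` satisfy the braid
relation
`(c_{N,P} ⊗ id_M) ∘ (id_N ⊗ c_{M,P}) ∘ (c_{M,N} ⊗ id_P)
  = (id_P ⊗ c_{M,N}) ∘ (c_{M,P} ⊗ id_N) ∘ (id_M ⊗ c_{N,P})`
as ℂ-linear maps `M ⊗ N ⊗ P → P ⊗ N ⊗ M` (with the standard associativity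
identifications of iterated tensor products). -/
theorem braid_relation (αM : DGAction G M) (αN : DGAction G N) (αP : DGAction G P) :
    (TensorProduct.map (braidMap αN αP) (LinearMap.id : M →ₗ[ℂ] M)) ∘ₗ
        (TensorProduct.assoc ℂ N P M).symm.toLinearMap ∘ₗ
        (TensorProduct.map (LinearMap.id : N →ₗ[ℂ] N) (braidMap αM αP)) ∘ₗ
        (TensorProduct.assoc ℂ N M P).toLinearMap ∘ₗ
        (TensorProduct.map (braidMap αM αN) (LinearMap.id : P →ₗ[ℂ] P)) =
      (TensorProduct.assoc ℂ P N M).symm.toLinearMap ∘ₗ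
        (TensorProduct.map (LinearMap.id : P →ₗ[ℂ] P) (braidMap αM αN)) ∘ₗ
        (TensorProduct.assoc ℂ P M N).toLinearMap ∘ₗ
        (TensorProduct.map (braidMap αM αP) (LinearMap.id : N →ₗ[ℂ] N)) ∘ₗ
        (TensorProduct.assoc ℂ M P N).symm.toLinearMap ∘ₗ
        (TensorProduct.map (LinearMap.id : M →ₗ[ℂ] M) (braidMap αN αP)) ∘ₗ
        (TensorProduct.assoc ℂ M N P).toLinearMap := by
  apply TensorProduct.ext_threefold
  intro m n p
  simp only [LinearMap.comp_apply, LinearEquiv.coe_coe, TensorProduct.map_tmul,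
    LinearMap.id_coe, id_eq, braidMap_tmul, TensorProduct.sum_tmul, TensorProduct.tmul_sum,
    map_sum, TensorProduct.assoc_tmul, TensorProduct.assoc_symm_tmul, act_act,
    one_mul, mul_one, inv_one, tmul_ite, ite_tmul', TensorProduct.tmul_zero,
    TensorProduct.zero_tmul,
    apply_ite (⇑(TensorProduct.assoc ℂ N M P)), apply_ite (⇑(TensorProduct.assoc ℂ M N P)),
    apply_ite (⇑(TensorProduct.assoc ℂ P M N)),
    apply_ite (⇑(TensorProduct.assoc ℂ N P M).symm),
    apply_ite (⇑(TensorProduct.assoc ℂ M P N).symm),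
    apply_ite (⇑(TensorProduct.assoc ℂ P N M).symm),
    apply_ite (⇑(TensorProduct.map (braidMap αN αP) (LinearMap.id : M →ₗ[ℂ] M))),
    apply_ite (⇑(TensorProduct.map (LinearMap.id : N →ₗ[ℂ] N) (braidMap αM αP))),
    apply_ite (⇑(TensorProduct.map (braidMap αM αP) (LinearMap.id : N →ₗ[ℂ] N))),
    apply_ite (⇑(TensorProduct.map (LinearMap.id : P →ₗ[ℂ] P) (braidMap αM αN))),
    map_zero,
    sum_if_const,
    Finset.sum_ite_eq, Finset.sum_ite_eq', Finset.mem_univ, if_true]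
  trans (∑ b : G, ∑ c : G, ∑ j : G,
      ((αP.act (b, 1)) p ⊗ₜ[ℂ] (αN.act (c, b)) n) ⊗ₜ[ℂ] (αM.act (j, c * b)) m)
  · -- LHS: reorder so that the `b` index is outermost, then reindex by conjugation
    rw [show (∑ x : G, ∑ x_1 : G, ∑ x_2 : G,
        ((αP.act (x_2, 1)) p ⊗ₜ[ℂ] (αN.act (x_2 * x * x_2⁻¹, x_2)) n) ⊗ₜ[ℂ]
          (αM.act (x_2 * x_1 * x_2⁻¹, x_2 * x)) m)
        = ∑ x_2 : G, ∑ x : G, ∑ x_1 : G,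
        ((αP.act (x_2, 1)) p ⊗ₜ[ℂ] (αN.act (x_2 * x * x_2⁻¹, x_2)) n) ⊗ₜ[ℂ]
          (αM.act (x_2 * x_1 * x_2⁻¹, x_2 * x)) m from by
      exact (Finset.sum_congr rfl fun _ _ => Finset.sum_comm).trans Finset.sum_comm]
    refine Finset.sum_congr rfl fun b _ => ?_
    refine Fintype.sum_equiv (MulAut.conj b).toEquiv _ _ fun a => ?_
    refine Fintype.sum_equiv (MulAut.conj b).toEquiv _ _ fun k => ?_
    simp only [MulAut.conj_apply, MulEquiv.toEquiv_eq_coe, EquivLike.coe_coe]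
    congr 2
    group
  · -- RHS: reindex the innermost sum by conjugation
    refine (Finset.sum_congr rfl fun a _ => Finset.sum_congr rfl fun k _ => ?_).symm
    refine Fintype.sum_equiv (MulAut.conj k).toEquiv _ _ fun j => ?_
    simp [MulAut.conj_apply]


end QuantumDoubleStmt16
end
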